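/- Let d, n, T ≥ 1 and let K ⊆ [0,1]^d be convex. For each t ∈ {1,…,T} and j ∈ {1,…,n}, let f_t^j : ℝ^d → ℝ be continuous DR-submodular, nonnegative and monotone on X = [0,1]^d (x ≤ y implies f_t^j(x) ≤ f_t^j(y)) with f_t^j(0) = 0, differentiable on X with continuous gradient satisfying ‖∇f_t^j(x) − ∇f_t^j(y)‖ ≤ β‖x − y‖ for all x, y ∈ X, let x̂_t^j ∈ K, and define g_t^j(x) = ∫_0^1 e^{z−1} · ∇f_t^j(z x) dz. Then for every i ∈ {1,…,n} and every x ∈ K: (1 − 1/e)·Σ_{t=1}^T Σ_{j=1}^n f_t^j(x) − Σ_{t=1}^T Σ_{j=1}^n f_t^j(x̂_t^i) ≤ Σ_{t=1}^T Σ_{j=1}^n ⟨g_t^j(x̂_t^j), x − x̂_t^i⟩ + Σ_{t=1}^T Σ_{j=1}^n ⟨∇f_t^j(x̂_t^j) − g_t^j(x̂_t^j), x̂_t^j − x̂_t^i⟩ + (β/2)·Σ_{t=1}^T Σ_{j=1}^n ‖x̂_t^i − x̂_t^j‖². -/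

import Mathlib

open MeasureTheory Finset

noncomputable section

/-- The unit cube `[0,1]^d` in `ℝ^d` (with Euclidean structure). -/
def cube (d : ℕ) : Set (EuclideanSpace ℝ (Fin d)) :=
  {x | ∀ i, x i ∈ Set.Icc (0 : ℝ) 1}

/-- `f` is continuous DR-submodular on the unit cube `[0,1]^d`: for coordinatewise
comparable points `x ≤ y` in the cube and any feasible move of size `z ≥ 0` along a
coordinate direction, the gain at `x` dominates the gain at `y`. -/
def DRSubmodularOn (d : ℕ) (f : EuclideanSpace ℝ (Fin d) → ℝ) : Prop :=
  ∀ x y : EuclideanSpace ℝ (Fin d), x ∈ cube d → y ∈ cube d → (∀ i, x i ≤ y i) →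
    ∀ (j : Fin d) (z : ℝ), 0 ≤ z →
      x + z • EuclideanSpace.single j (1 : ℝ) ∈ cube d →
      y + z • EuclideanSpace.single j (1 : ℝ) ∈ cube d →
      f (y + z • EuclideanSpace.single j (1 : ℝ)) - f y ≤
        f (x + z • EuclideanSpace.single j (1 : ℝ)) - f x

variable {d : ℕ}

lemma cube_convex : Convex ℝ (cube d) := by
  intro x hx y hy a b ha hb hab
  intro i
  have hxi := hx i; have hyi := hy i
  simp only [Set.mem_Icc] at hxi hyi ⊢
  have : (a • x + b • y) i = a * x i + b * y i := by
    simp [PiLp.add_apply, PiLp.smul_apply, smul_eq_mul]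
  rw [this]
  constructor
  · have := mul_nonneg ha hxi.1; have := mul_nonneg hb hyi.1; linarith
  · nlinarith [hxi.1, hxi.2, hyi.1, hyi.2]

lemma zero_mem_cube : (0 : EuclideanSpace ℝ (Fin d)) ∈ cube d := by
  intro i; simp

lemma smul_mem_cube {x : EuclideanSpace ℝ (Fin d)} (hx : x ∈ cube d) {z : ℝ}
    (hz : z ∈ Set.Icc (0:ℝ) 1) : z • x ∈ cube d := by
  intro i
  have := hx i
  simp only [Set.mem_Icc, PiLp.smul_apply, smul_eq_mul] at *
  constructor
  · exact mul_nonneg hz.1 this.1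
  · nlinarith [hz.1, hz.2, this.1, this.2]

lemma segment_mem_cube {x y : EuclideanSpace ℝ (Fin d)} (hx : x ∈ cube d) (hy : y ∈ cube d)
    {t : ℝ} (ht : t ∈ Set.Icc (0:ℝ) 1) : x + t • (y - x) ∈ cube d := by
  have : x + t • (y - x) = (1 - t) • x + t • y := by
    module
  rw [this]
  exact cube_convex hx hy (by linarith [ht.1, ht.2]) ht.1 (by ring)

lemma helper_le {a b Kc δ : ℝ} (hδ : 0 < δ) (hK : 0 ≤ Kc)
    (h : ∀ z : ℝ, 0 < z → z ≤ δ → b ≤ a + Kc * z) : b ≤ a := by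
  by_contra hab
  push_neg at hab
  set z := min δ ((b - a) / (Kc + 1)) with hz
  have hz0 : 0 < z := lt_min hδ (div_pos (by linarith) (by linarith))
  have hzδ : z ≤ δ := min_le_left _ _
  have h2 : z ≤ (b - a) / (Kc + 1) := min_le_right _ _
  have := h z hz0 hzδ
  have hKz : Kc * z ≤ Kc * ((b - a) / (Kc + 1)) := by
    exact mul_le_mul_of_nonneg_left h2 hK
  have : b ≤ a + Kc * ((b - a) / (Kc + 1)) := by linarith
  have hlt : Kc * ((b - a) / (Kc + 1)) < b - a := by
    have hK1 : (0:ℝ) < Kc + 1 := by linarith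
    rw [← mul_div_assoc, div_lt_iff₀ hK1]
    nlinarith
  linarith

variable {f : EuclideanSpace ℝ (Fin d) → ℝ}
  {f' : EuclideanSpace ℝ (Fin d) → EuclideanSpace ℝ (Fin d)} {β : ℝ}

lemma line_hasDerivWithinAt
    (hgrad : ∀ x ∈ cube d, HasGradientWithinAt f (f' x) (cube d) x)
    {x v : EuclideanSpace ℝ (Fin d)}
    (hmap : ∀ t ∈ Set.Icc (0:ℝ) 1, x + t • v ∈ cube d)
    {t : ℝ} (ht : t ∈ Set.Icc (0:ℝ) 1) :
    HasDerivWithinAt (fun s : ℝ => f (x + s • v))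
      (inner ℝ (f' (x + t • v)) v : ℝ) (Set.Icc (0:ℝ) 1) t := by
  have hγ : HasDerivWithinAt (fun s : ℝ => x + s • v) v (Set.Icc (0:ℝ) 1) t := by
    have h1 : HasDerivAt (fun s : ℝ => x + s • v) ((1:ℝ) • v) t :=
      ((hasDerivAt_id t).smul_const v).const_add x
    simpa using h1.hasDerivWithinAt
  have hF := (hgrad _ (hmap t ht)).hasFDerivWithinAt
  have := hF.comp_hasDerivWithinAt t hγ (fun s hs => hmap s hs)
  simpa [InnerProductSpace.toDual_apply_apply, Function.comp_def] using this

lemma line_continuousOn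
    (hgrad : ∀ x ∈ cube d, HasGradientWithinAt f (f' x) (cube d) x)
    {x v : EuclideanSpace ℝ (Fin d)}
    (hmap : ∀ t ∈ Set.Icc (0:ℝ) 1, x + t • v ∈ cube d) :
    ContinuousOn (fun s : ℝ => f (x + s • v)) (Set.Icc (0:ℝ) 1) :=
  fun t ht => ((line_hasDerivWithinAt hgrad hmap ht).differentiableWithinAt).continuousWithinAt

lemma line_grad_continuousOn
    (hcont : ContinuousOn f' (cube d))
    {x v : EuclideanSpace ℝ (Fin d)}
    (hmap : ∀ t ∈ Set.Icc (0:ℝ) 1, x + t • v ∈ cube d) :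
    ContinuousOn (fun s : ℝ => (inner ℝ (f' (x + s • v)) v : ℝ)) (Set.Icc (0:ℝ) 1) := by
  have hγ : ContinuousOn (fun s : ℝ => x + s • v) (Set.Icc (0:ℝ) 1) :=
    (continuous_const.add (continuous_id.smul continuous_const)).continuousOn
  exact (hcont.comp hγ (fun s hs => hmap s hs)).inner continuousOn_const

lemma ftc_line
    (hgrad : ∀ x ∈ cube d, HasGradientWithinAt f (f' x) (cube d) x)
    (hcont : ContinuousOn f' (cube d))
    {x v : EuclideanSpace ℝ (Fin d)}
    (hmap : ∀ t ∈ Set.Icc (0:ℝ) 1, x + t • v ∈ cube d) :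
    ∫ t in (0:ℝ)..1, (inner ℝ (f' (x + t • v)) v : ℝ) = f (x + v) - f x := by
  have hint : IntervalIntegrable (fun t : ℝ => (inner ℝ (f' (x + t • v)) v : ℝ))
      volume 0 1 := by
    apply ContinuousOn.intervalIntegrable
    rw [Set.uIcc_of_le zero_le_one]
    exact line_grad_continuousOn hcont hmap
  have := intervalIntegral.integral_eq_sub_of_hasDeriv_right_of_le zero_le_one
    (line_continuousOn hgrad hmap)
    (fun t ht => ((line_hasDerivWithinAt hgrad hmap (Set.mem_Icc_of_Ioo ht)).hasDerivAt
      (Icc_mem_nhds ht.1 ht.2)).hasDerivWithinAt)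
    hint
  simpa using this

lemma descent
    (hgrad : ∀ x ∈ cube d, HasGradientWithinAt f (f' x) (cube d) x)
    (hcont : ContinuousOn f' (cube d))
    (hβ : 0 ≤ β) (hlip : ∀ x ∈ cube d, ∀ y ∈ cube d, ‖f' x - f' y‖ ≤ β * ‖x - y‖)
    {x y : EuclideanSpace ℝ (Fin d)} (hx : x ∈ cube d) (hy : y ∈ cube d) :
    |f y - f x - (inner ℝ (f' x) (y - x) : ℝ)| ≤ β / 2 * ‖y - x‖ ^ 2 := by
  set v := y - x with hv
  have hmap : ∀ t ∈ Set.Icc (0:ℝ) 1, x + t • v ∈ cube d :=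
    fun t ht => segment_mem_cube hx hy ht
  have h1 : f y - f x = ∫ t in (0:ℝ)..1, (inner ℝ (f' (x + t • v)) v : ℝ) := by
    rw [ftc_line hgrad hcont hmap]
    simp [hv]
  have hint1 : IntervalIntegrable (fun t : ℝ => (inner ℝ (f' (x + t • v)) v : ℝ)) volume 0 1 := by
    apply ContinuousOn.intervalIntegrable
    rw [Set.uIcc_of_le zero_le_one]
    exact line_grad_continuousOn hcont hmap
  have h2 : (inner ℝ (f' x) v : ℝ) = ∫ t in (0:ℝ)..1, (inner ℝ (f' x) v : ℝ) := by
    simp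
  have h3 : f y - f x - (inner ℝ (f' x) v : ℝ)
      = ∫ t in (0:ℝ)..1, ((inner ℝ (f' (x + t • v)) v : ℝ) - inner ℝ (f' x) v) := by
    rw [intervalIntegral.integral_sub hint1 intervalIntegrable_const, h1,
      intervalIntegral.integral_const]
    simp
  rw [h3]
  have hbound : ∀ t ∈ Set.Ioc (0:ℝ) 1,
      ‖(inner ℝ (f' (x + t • v)) v : ℝ) - inner ℝ (f' x) v‖ ≤ β * ‖v‖ ^ 2 * t := by
    intro t ht
    have htI : t ∈ Set.Icc (0:ℝ) 1 := ⟨le_of_lt ht.1, ht.2⟩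
    rw [← inner_sub_left]
    calc ‖(inner ℝ (f' (x + t • v) - f' x) v : ℝ)‖
        ≤ ‖f' (x + t • v) - f' x‖ * ‖v‖ := norm_inner_le_norm _ _
      _ ≤ (β * ‖(x + t • v) - x‖) * ‖v‖ := by
          apply mul_le_mul_of_nonneg_right _ (norm_nonneg _)
          exact hlip _ (hmap t htI) _ hx
      _ = β * ‖v‖ ^ 2 * t := by
          have : ‖(x + t • v) - x‖ = t * ‖v‖ := by
            simp [norm_smul, abs_of_nonneg (le_of_lt ht.1)]
          rw [this]; ring
  have habs : |∫ t in (0:ℝ)..1, ((inner ℝ (f' (x + t • v)) v : ℝ) - inner ℝ (f' x) v)|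
      ≤ |∫ t in (0:ℝ)..1, β * ‖v‖ ^ 2 * t| := by
    rw [← Real.norm_eq_abs]
    refine (intervalIntegral.norm_integral_le_of_norm_le zero_le_one ?_ ?_).trans (le_abs_self _)
    · exact Filter.Eventually.of_forall hbound
    · exact (continuous_const.mul continuous_id).intervalIntegrable 0 1
  have hval : ∫ t in (0:ℝ)..1, β * ‖v‖ ^ 2 * t = β / 2 * ‖v‖ ^ 2 := by
    rw [intervalIntegral.integral_const_mul, integral_id]
    ring
  exact habs.trans (le_of_eq (by
    rw [hval]
    exact abs_of_nonneg (mul_nonneg (div_nonneg hβ two_pos.le) (sq_nonneg _))))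

lemma add_single_apply (u : EuclideanSpace ℝ (Fin d)) (c : ℝ) (j i : Fin d) :
    (u + c • EuclideanSpace.single j (1:ℝ)) i = u i + (if i = j then c else 0) := by
  simp [EuclideanSpace.single_apply, mul_ite]

lemma mem_cube_add_single {u : EuclideanSpace ℝ (Fin d)} (hu : u ∈ cube d) {c : ℝ} {j : Fin d}
    (h0 : 0 ≤ u j + c) (h1 : u j + c ≤ 1) :
    u + c • EuclideanSpace.single j (1:ℝ) ∈ cube d := by
  intro i
  rw [add_single_apply]
  by_cases hij : i = j
  · subst hij; simpa using ⟨h0, h1⟩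
  · simp only [if_neg hij, add_zero]
    exact hu i

section Steps
variable (hgrad : ∀ x ∈ cube d, HasGradientWithinAt f (f' x) (cube d) x)
  (hcont : ContinuousOn f' (cube d)) (hβ : 0 ≤ β)
  (hlip : ∀ x ∈ cube d, ∀ y ∈ cube d, ‖f' x - f' y‖ ≤ β * ‖x - y‖)

include hgrad hcont hβ hlip in
lemma step_bound {p : EuclideanSpace ℝ (Fin d)} (hp : p ∈ cube d) {c : ℝ} {j : Fin d}
    (hq : p + c • EuclideanSpace.single j (1:ℝ) ∈ cube d) :
    |f (p + c • EuclideanSpace.single j (1:ℝ)) - f p - c * f' p j| ≤ β / 2 * c ^ 2 := by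
  have h := descent hgrad hcont hβ hlip hp hq
  have e1 : (p + c • EuclideanSpace.single j (1:ℝ)) - p = c • EuclideanSpace.single j (1:ℝ) := by
    abel
  rw [e1] at h
  have e2 : (inner ℝ (f' p) (c • EuclideanSpace.single j (1:ℝ)) : ℝ) = c * f' p j := by
    rw [inner_smul_right]
    have := EuclideanSpace.inner_single_right (𝕜 := ℝ) j 1 (f' p)
    simp only [RCLike.conj_to_real, one_mul] at this
    rw [this]
  have e3 : ‖c • EuclideanSpace.single j (1:ℝ)‖ ^ 2 = c ^ 2 := by
    rw [norm_smul]
    simp [abs_sq]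
  rw [e2, e3] at h
  exact h

include hgrad hcont hβ hlip in
lemma grad_nonneg
    (hmono : ∀ x ∈ cube d, ∀ y ∈ cube d, (∀ i, x i ≤ y i) → f x ≤ f y)
    {u : EuclideanSpace ℝ (Fin d)} (hu : u ∈ cube d) (j : Fin d) :
    0 ≤ f' u j := by
  have huj := hu j
  simp only [Set.mem_Icc] at huj
  by_cases h : u j < 1
  · -- move right
    apply helper_le (δ := 1 - u j) (Kc := β / 2) (by linarith) (by linarith)
    intro z hz0 hzδ
    have hq : u + z • EuclideanSpace.single j (1:ℝ) ∈ cube d :=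
      mem_cube_add_single hu (by linarith) (by linarith)
    have hb := abs_le.1 (step_bound hgrad hcont hβ hlip hu hq)
    have hm : f u ≤ f (u + z • EuclideanSpace.single j (1:ℝ)) := by
      apply hmono u hu _ hq
      intro i
      rw [add_single_apply]
      split <;> [linarith; linarith]
    nlinarith
  · -- u j = 1, move left
    push_neg at h
    have huj1 : u j = 1 := le_antisymm huj.2 h
    apply helper_le (δ := 1) (Kc := β / 2) one_pos (by linarith)
    intro z hz0 hzδ
    have hq : u + (-z) • EuclideanSpace.single j (1:ℝ) ∈ cube d :=
      mem_cube_add_single hu (by rw [huj1]; linarith) (by rw [huj1]; linarith)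
    have hb := abs_le.1 (step_bound hgrad hcont hβ hlip hu hq)
    have hm : f (u + (-z) • EuclideanSpace.single j (1:ℝ)) ≤ f u := by
      apply hmono _ hq u hu
      intro i
      rw [add_single_apply]
      split <;> [linarith; linarith]
    nlinarith

include hgrad hcont hβ hlip in
lemma grad_antitone
    (hsub : DRSubmodularOn d f)
    {u w : EuclideanSpace ℝ (Fin d)} (hu : u ∈ cube d) (hw : w ∈ cube d)
    (hle : ∀ i, u i ≤ w i) (j : Fin d) :
    f' w j ≤ f' u j := by
  have huj := hu j; have hwj := hw j
  simp only [Set.mem_Icc] at huj hwj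
  by_cases h1 : w j < 1
  · -- both move right
    apply helper_le (δ := 1 - w j) (Kc := β) (by linarith) hβ
    intro z hz0 hzδ
    have hqu : u + z • EuclideanSpace.single j (1:ℝ) ∈ cube d :=
      mem_cube_add_single hu (by linarith) (by linarith [hle j])
    have hqw : w + z • EuclideanSpace.single j (1:ℝ) ∈ cube d :=
      mem_cube_add_single hw (by linarith) (by linarith)
    have hdr := hsub u w hu hw hle j z (le_of_lt hz0) hqu hqw
    have hbu := abs_le.1 (step_bound hgrad hcont hβ hlip hu hqu)
    have hbw := abs_le.1 (step_bound hgrad hcont hβ hlip hw hqw)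
    nlinarith
  · push_neg at h1
    have hwj1 : w j = 1 := le_antisymm hwj.2 h1
    by_cases h2 : 0 < u j
    · -- both move left
      apply helper_le (δ := u j) (Kc := β) h2 hβ
      intro z hz0 hzδ
      set u' := u + (-z) • EuclideanSpace.single j (1:ℝ) with hu'
      set w' := w + (-z) • EuclideanSpace.single j (1:ℝ) with hw'
      have hqu : u' ∈ cube d := mem_cube_add_single hu (by linarith) (by linarith)
      have hqw : w' ∈ cube d := mem_cube_add_single hw (by rw [hwj1]; linarith [hle j]) (by rw [hwj1]; linarith)
      have hle' : ∀ i, u' i ≤ w' i := by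
        intro i
        rw [hu', hw', add_single_apply, add_single_apply]
        split <;> [linarith [hle i]; linarith [hle i]]
      have heu : u' + z • EuclideanSpace.single j (1:ℝ) = u := by
        rw [hu']; module
      have hew : w' + z • EuclideanSpace.single j (1:ℝ) = w := by
        rw [hw']; module
      have hdr := hsub u' w' hqu hqw hle' j z (le_of_lt hz0) (by rw [heu]; exact hu) (by rw [hew]; exact hw)
      rw [heu, hew] at hdr
      have hbu := abs_le.1 (step_bound hgrad hcont hβ hlip hu hqu)
      have hbw := abs_le.1 (step_bound hgrad hcont hβ hlip hw hqw)
      nlinarith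
    · -- u j = 0, w j = 1 : u moves right, w moves left
      push_neg at h2
      have huj0 : u j = 0 := le_antisymm h2 huj.1
      apply helper_le (δ := 1) (Kc := β) one_pos hβ
      intro z hz0 hzδ
      set w' := w + (-z) • EuclideanSpace.single j (1:ℝ) with hw'
      have hqu : u + z • EuclideanSpace.single j (1:ℝ) ∈ cube d :=
        mem_cube_add_single hu (by linarith) (by rw [huj0]; linarith)
      have hqw : w' ∈ cube d := mem_cube_add_single hw (by rw [hwj1]; linarith) (by rw [hwj1]; linarith)
      have hle' : ∀ i, u i ≤ w' i := by
        intro i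
        rw [hw', add_single_apply]
        split
        · next hij => subst hij; rw [huj0, hwj1]; linarith
        · simpa using hle i
      have hew : w' + z • EuclideanSpace.single j (1:ℝ) = w := by
        rw [hw']; module
      have hdr := hsub u w' hu hqw hle' j z (le_of_lt hz0) hqu (by rw [hew]; exact hw)
      rw [hew] at hdr
      have hbu := abs_le.1 (step_bound hgrad hcont hβ hlip hu hqu)
      have hbw := abs_le.1 (step_bound hgrad hcont hβ hlip hw hqw)
      nlinarith
end Steps

section Main
variable (hgrad : ∀ x ∈ cube d, HasGradientWithinAt f (f' x) (cube d) x)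
  (hcont : ContinuousOn f' (cube d)) (hβ : 0 ≤ β)
  (hlip : ∀ x ∈ cube d, ∀ y ∈ cube d, ‖f' x - f' y‖ ≤ β * ‖x - y‖)
  (hsub : DRSubmodularOn d f)
  (hmono : ∀ x ∈ cube d, ∀ y ∈ cube d, (∀ i, x i ≤ y i) → f x ≤ f y)

include hgrad hcont hβ hlip hsub in
lemma concave_dir
    {u w : EuclideanSpace ℝ (Fin d)} (hu : u ∈ cube d) (hw : w ∈ cube d)
    (hle : ∀ i, u i ≤ w i) :
    f w - f u ≤ (inner ℝ (f' u) (w - u) : ℝ) := by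
  set v := w - u with hv
  have hmap : ∀ t ∈ Set.Icc (0:ℝ) 1, u + t • v ∈ cube d :=
    fun t ht => segment_mem_cube hu hw ht
  have h1 : f w - f u = ∫ t in (0:ℝ)..1, (inner ℝ (f' (u + t • v)) v : ℝ) := by
    rw [ftc_line hgrad hcont hmap]
    simp [hv]
  rw [h1]
  have hint1 : IntervalIntegrable (fun t : ℝ => (inner ℝ (f' (u + t • v)) v : ℝ)) volume 0 1 := by
    apply ContinuousOn.intervalIntegrable
    rw [Set.uIcc_of_le zero_le_one]
    exact line_grad_continuousOn hcont hmap
  have hmono' : ∀ t ∈ Set.Icc (0:ℝ) 1,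
      (inner ℝ (f' (u + t • v)) v : ℝ) ≤ (inner ℝ (f' u) v : ℝ) := by
    intro t ht
    have hmem := hmap t ht
    have hle2 : ∀ i, u i ≤ (u + t • v) i := by
      intro i
      have : (u + t • v) i = u i + t * (w i - u i) := by
        simp [hv, PiLp.add_apply, PiLp.smul_apply, PiLp.sub_apply, smul_eq_mul]
      rw [this]
      nlinarith [hle i, ht.1]
    rw [PiLp.inner_apply, PiLp.inner_apply]
    apply Finset.sum_le_sum
    intro i _
    simp only [RCLike.inner_apply, RCLike.conj_to_real]
    apply mul_le_mul_of_nonneg_left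
    · exact grad_antitone hgrad hcont hβ hlip hsub hu hmem hle2 i
    · have : v i = w i - u i := by simp [hv]
      rw [this]; linarith [hle i]
  calc ∫ t in (0:ℝ)..1, (inner ℝ (f' (u + t • v)) v : ℝ)
      ≤ ∫ t in (0:ℝ)..1, (inner ℝ (f' u) v : ℝ) := by
        apply intervalIntegral.integral_mono_on zero_le_one hint1 intervalIntegrable_const
        exact hmono'
    _ = (inner ℝ (f' u) v : ℝ) := by simp

include hgrad hcont hβ hlip hsub hmono in
lemma grad_dominates
    {u x : EuclideanSpace ℝ (Fin d)} (hu : u ∈ cube d) (hx : x ∈ cube d) :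
    f x - f u ≤ (inner ℝ (f' u) x : ℝ) := by
  set w : EuclideanSpace ℝ (Fin d) := WithLp.toLp 2 (fun i => max (u i) (x i)) with hwdef
  have hwapp : ∀ i, w i = max (u i) (x i) := fun i => rfl
  have hw : w ∈ cube d := by
    intro i
    rw [hwapp i]
    have h1 := hu i; have h2 := hx i
    simp only [Set.mem_Icc] at *
    constructor
    · exact le_max_of_le_left h1.1
    · exact max_le h1.2 h2.2
  have hle : ∀ i, u i ≤ w i := fun i => by rw [hwapp i]; exact le_max_left _ _
  have h1 : f w - f u ≤ (inner ℝ (f' u) (w - u) : ℝ) :=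
    concave_dir hgrad hcont hβ hlip hsub hu hw hle
  have h2 : f x ≤ f w :=
    hmono x hx w hw (fun i => by rw [hwapp i]; exact le_max_right _ _)
  have h3 : (inner ℝ (f' u) (w - u) : ℝ) ≤ (inner ℝ (f' u) x : ℝ) := by
    rw [PiLp.inner_apply, PiLp.inner_apply]
    apply Finset.sum_le_sum
    intro i _
    simp only [RCLike.inner_apply, RCLike.conj_to_real]
    apply mul_le_mul_of_nonneg_right _ (grad_nonneg hgrad hcont hβ hlip hmono hu i)
    have : (w - u) i = max (u i) (x i) - u i := by
      simp [PiLp.sub_apply, hwapp i]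
    rw [this]
    have h4 := (hu i).1; have h5 := (hx i).1
    rcases max_cases (u i) (x i) with ⟨hm, _⟩ | ⟨hm, _⟩ <;> rw [hm] <;> linarith
  linarith

include hgrad hcont hβ hlip hsub hmono in
lemma boosting (hzero : f 0 = 0)
    {x y : EuclideanSpace ℝ (Fin d)} (hx : x ∈ cube d) (hy : y ∈ cube d) :
    (1 - 1 / Real.exp 1) * f x - f y ≤
      (inner ℝ (∫ z in (0:ℝ)..1, Real.exp (z - 1) • f' (z • y)) (x - y) : ℝ) := by
  have hmapy : ∀ t ∈ Set.Icc (0:ℝ) 1, (0 : EuclideanSpace ℝ (Fin d)) + t • y ∈ cube d := by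
    intro t ht
    rw [zero_add]
    exact smul_mem_cube hy ht
  have hzy : ∀ z ∈ Set.Icc (0:ℝ) 1, z • y ∈ cube d := fun z hz => smul_mem_cube hy hz
  have heq : (fun s : ℝ => f ((0 : EuclideanSpace ℝ (Fin d)) + s • y)) = fun s : ℝ => f (s • y) := by
    funext s; rw [zero_add]
  have key1 : ContinuousOn (fun z : ℝ => f (z • y)) (Set.Icc (0:ℝ) 1) := by
    rw [← heq]; exact line_continuousOn hgrad hmapy
  have key2 : ∀ v : EuclideanSpace ℝ (Fin d),
      ContinuousOn (fun z : ℝ => (inner ℝ (f' (z • y)) v : ℝ)) (Set.Icc (0:ℝ) 1) := by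
    intro v
    exact (hcont.comp ((continuous_id.smul continuous_const).continuousOn) hzy).inner
      continuousOn_const
  have key3 : ∀ z ∈ Set.Icc (0:ℝ) 1, HasDerivWithinAt (fun z : ℝ => f (z • y))
      (inner ℝ (f' (z • y)) y : ℝ) (Set.Icc (0:ℝ) 1) z := by
    intro z hz
    have := line_hasDerivWithinAt hgrad hmapy hz
    rw [heq, zero_add] at this
    exact this
  have hexp : ∀ z : ℝ, HasDerivAt (fun z : ℝ => Real.exp (z - 1)) (Real.exp (z - 1)) z := by
    intro z
    have h1 : HasDerivAt (fun z : ℝ => z - 1) 1 z := (hasDerivAt_id z).sub_const 1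
    have := (Real.hasDerivAt_exp (z - 1)).comp z h1
    simpa [Function.comp_def] using this
  -- weighted FTC
  have hFTC : ∫ z in (0:ℝ)..1,
      (Real.exp (z - 1) * f (z • y) + Real.exp (z - 1) * (inner ℝ (f' (z • y)) y : ℝ)) = f y := by
    have hcontF : ContinuousOn (fun z : ℝ => Real.exp (z - 1) * f (z • y)) (Set.Icc (0:ℝ) 1) :=
      ((Real.continuous_exp.comp (continuous_sub_right 1)).continuousOn).mul key1
    have hderivF : ∀ z ∈ Set.Ioo (0:ℝ) 1, HasDerivWithinAt
        (fun z : ℝ => Real.exp (z - 1) * f (z • y))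
        (Real.exp (z - 1) * f (z • y) + Real.exp (z - 1) * (inner ℝ (f' (z • y)) y : ℝ))
        (Set.Ioi z) z := by
      intro z hz
      have hd := ((hexp z).hasDerivWithinAt.mul (key3 z (Set.mem_Icc_of_Ioo hz)))
      exact ((hd.hasDerivAt (Icc_mem_nhds hz.1 hz.2)).hasDerivWithinAt)
    have hintF : IntervalIntegrable
        (fun z : ℝ => Real.exp (z - 1) * f (z • y) + Real.exp (z - 1) * (inner ℝ (f' (z • y)) y : ℝ))
        volume 0 1 := by
      apply ContinuousOn.intervalIntegrable
      rw [Set.uIcc_of_le zero_le_one]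
      exact (((Real.continuous_exp.comp (continuous_sub_right 1)).continuousOn).mul key1).add
        (((Real.continuous_exp.comp (continuous_sub_right 1)).continuousOn).mul (key2 y))
    have := intervalIntegral.integral_eq_sub_of_hasDeriv_right_of_le zero_le_one hcontF hderivF hintF
    rw [this]
    simp [hzero]
  -- swap inner and integral
  set c := x - y with hc
  have hFint : IntervalIntegrable (fun z : ℝ => Real.exp (z - 1) • f' (z • y)) volume 0 1 := by
    apply ContinuousOn.intervalIntegrable
    rw [Set.uIcc_of_le zero_le_one]
    apply ContinuousOn.smul ((Real.continuous_exp.comp (continuous_sub_right 1)).continuousOn)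
    exact hcont.comp ((continuous_id.smul continuous_const).continuousOn) hzy
  have hswap : (inner ℝ (∫ z in (0:ℝ)..1, Real.exp (z - 1) • f' (z • y)) c : ℝ)
      = ∫ z in (0:ℝ)..1, Real.exp (z - 1) * (inner ℝ (f' (z • y)) c : ℝ) := by
    rw [real_inner_comm]
    have hsw := (innerSL ℝ c).intervalIntegral_comp_comm hFint
    simp only [innerSL_apply_apply] at hsw
    rw [← hsw]
    congr 1
    funext z
    rw [inner_smul_right, real_inner_comm]
  -- pointwise inequality
  have hpt : ∀ z ∈ Set.Icc (0:ℝ) 1,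
      Real.exp (z - 1) * f x
        - (Real.exp (z - 1) * f (z • y) + Real.exp (z - 1) * (inner ℝ (f' (z • y)) y : ℝ))
      ≤ Real.exp (z - 1) * (inner ℝ (f' (z • y)) c : ℝ) := by
    intro z hz
    have hdom : f x - f (z • y) ≤ (inner ℝ (f' (z • y)) x : ℝ) :=
      grad_dominates hgrad hcont hβ hlip hsub hmono (hzy z hz) hx
    have hsubr : (inner ℝ (f' (z • y)) c : ℝ) = (inner ℝ (f' (z • y)) x : ℝ) - inner ℝ (f' (z • y)) y := by
      rw [hc, inner_sub_right]
    have hepos : (0:ℝ) < Real.exp (z - 1) := Real.exp_pos _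
    rw [hsubr]
    nlinarith
  -- integrate
  have hint1 : IntervalIntegrable (fun z : ℝ => Real.exp (z - 1) * f x
      - (Real.exp (z - 1) * f (z • y) + Real.exp (z - 1) * (inner ℝ (f' (z • y)) y : ℝ)))
      volume 0 1 := by
    apply ContinuousOn.intervalIntegrable
    rw [Set.uIcc_of_le zero_le_one]
    exact (((Real.continuous_exp.comp (continuous_sub_right 1)).continuousOn).mul continuousOn_const).sub
      ((((Real.continuous_exp.comp (continuous_sub_right 1)).continuousOn).mul key1).add
        (((Real.continuous_exp.comp (continuous_sub_right 1)).continuousOn).mul (key2 y)))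
  have hint2 : IntervalIntegrable (fun z : ℝ => Real.exp (z - 1) * (inner ℝ (f' (z • y)) c : ℝ))
      volume 0 1 := by
    apply ContinuousOn.intervalIntegrable
    rw [Set.uIcc_of_le zero_le_one]
    exact ((Real.continuous_exp.comp (continuous_sub_right 1)).continuousOn).mul (key2 c)
  have hmono2 := intervalIntegral.integral_mono_on zero_le_one hint1 hint2 hpt
  -- compute left integral
  have hexpint : ∫ z in (0:ℝ)..1, Real.exp (z - 1) = 1 - Real.exp (-1) := by
    rw [intervalIntegral.integral_eq_sub_of_hasDerivAt (fun z _ => hexp z)]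
    · norm_num
    · apply ContinuousOn.intervalIntegrable
      exact (Real.continuous_exp.comp (continuous_sub_right 1)).continuousOn
  have hintFmix : IntervalIntegrable
      (fun z : ℝ => Real.exp (z - 1) * f (z • y) + Real.exp (z - 1) * (inner ℝ (f' (z • y)) y : ℝ))
      volume 0 1 := by
    apply ContinuousOn.intervalIntegrable
    rw [Set.uIcc_of_le zero_le_one]
    exact (((Real.continuous_exp.comp (continuous_sub_right 1)).continuousOn).mul key1).add
      (((Real.continuous_exp.comp (continuous_sub_right 1)).continuousOn).mul (key2 y))
  have hleft : ∫ z in (0:ℝ)..1, (Real.exp (z - 1) * f x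
      - (Real.exp (z - 1) * f (z • y) + Real.exp (z - 1) * (inner ℝ (f' (z • y)) y : ℝ)))
      = (1 - Real.exp (-1)) * f x - f y := by
    rw [intervalIntegral.integral_sub (by
        apply ContinuousOn.intervalIntegrable
        rw [Set.uIcc_of_le zero_le_one]
        exact ((Real.continuous_exp.comp (continuous_sub_right 1)).continuousOn).mul continuousOn_const)
      hintFmix, hFTC]
    have : ∫ z in (0:ℝ)..1, Real.exp (z - 1) * f x = (1 - Real.exp (-1)) * f x := by
      rw [intervalIntegral.integral_mul_const, hexpint]
    rw [this]
  have hexp1 : (1 : ℝ) - 1 / Real.exp 1 = 1 - Real.exp (-1) := by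
    rw [Real.exp_neg, one_div]
  rw [hexp1, hswap]
  rw [hleft] at hmono2
  exact hmono2
end Main

/-- deterministic core of Theorem 6: the monotone smooth-case variant
of the reduction based on the boosting technique. -/
theorem reduction_boosting_monotone_smooth
    (d n T : ℕ) (hd : 1 ≤ d) (hn : 1 ≤ n) (hT : 1 ≤ T)
    (K : Set (EuclideanSpace ℝ (Fin d))) (hKcvx : Convex ℝ K) (hKX : K ⊆ cube d)
    (β : ℝ)
    (f : Fin T → Fin n → EuclideanSpace ℝ (Fin d) → ℝ)
    (f' : Fin T → Fin n → EuclideanSpace ℝ (Fin d) → EuclideanSpace ℝ (Fin d))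
    (hsub : ∀ t j, DRSubmodularOn d (f t j))
    (hnonneg : ∀ t j, ∀ x ∈ cube d, 0 ≤ f t j x)
    (hmono : ∀ t j, ∀ x ∈ cube d, ∀ y ∈ cube d, (∀ i, x i ≤ y i) → f t j x ≤ f t j y)
    (hzero : ∀ t j, f t j 0 = 0)
    (hgrad : ∀ t j, ∀ x ∈ cube d, HasGradientWithinAt (f t j) (f' t j x) (cube d) x)
    (hcont : ∀ t j, ContinuousOn (f' t j) (cube d))
    (hlip : ∀ t j, ∀ x ∈ cube d, ∀ y ∈ cube d, ‖f' t j x - f' t j y‖ ≤ β * ‖x - y‖)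
    (xhat : Fin T → Fin n → EuclideanSpace ℝ (Fin d))
    (hxhat : ∀ t j, xhat t j ∈ K)
    (g : Fin T → Fin n → EuclideanSpace ℝ (Fin d) → EuclideanSpace ℝ (Fin d))
    (hg : ∀ t j, ∀ x ∈ K, g t j x = ∫ z in (0:ℝ)..1, Real.exp (z - 1) • f' t j (z • x)) :
    ∀ i : Fin n, ∀ x ∈ K,
      (1 - 1 / Real.exp 1) * (∑ t, ∑ j, f t j x) - ∑ t, ∑ j, f t j (xhat t i) ≤
        (∑ t, ∑ j, (inner ℝ (g t j (xhat t j)) (x - xhat t i) : ℝ)) +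
          (∑ t, ∑ j,
            (inner ℝ (f' t j (xhat t j) - g t j (xhat t j)) (xhat t j - xhat t i) : ℝ)) +
          (β / 2) * ∑ t, ∑ j, ‖xhat t i - xhat t j‖ ^ 2 := by
  intro i x hxK
  -- β is nonnegative
  have hβ : 0 ≤ β := by
    have h0 : (0 : EuclideanSpace ℝ (Fin d)) ∈ cube d := zero_mem_cube
    have h1 : EuclideanSpace.single (⟨0, hd⟩ : Fin d) (1:ℝ) ∈ cube d := by
      intro k
      rw [EuclideanSpace.single_apply]
      split <;> norm_num
    have hl := hlip ⟨0, hT⟩ ⟨0, hn⟩ 0 h0 _ h1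
    have hnorm : ‖(0 : EuclideanSpace ℝ (Fin d)) - EuclideanSpace.single (⟨0, hd⟩ : Fin d) (1:ℝ)‖ = 1 := by
      rw [zero_sub, norm_neg, EuclideanSpace.norm_single]
      norm_num
    rw [hnorm, mul_one] at hl
    exact le_trans (norm_nonneg _) hl
  have hxC : x ∈ cube d := hKX hxK
  have key : ∀ t j,
      (1 - 1 / Real.exp 1) * f t j x - f t j (xhat t i) ≤
        (inner ℝ (g t j (xhat t j)) (x - xhat t i) : ℝ) +
          (inner ℝ (f' t j (xhat t j) - g t j (xhat t j)) (xhat t j - xhat t i) : ℝ) +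
          β / 2 * ‖xhat t i - xhat t j‖ ^ 2 := by
    intro t j
    have hyC : xhat t j ∈ cube d := hKX (hxhat t j)
    have hiC : xhat t i ∈ cube d := hKX (hxhat t i)
    have hb : (1 - 1 / Real.exp 1) * f t j x - f t j (xhat t j) ≤
        (inner ℝ (g t j (xhat t j)) (x - xhat t j) : ℝ) := by
      rw [hg t j _ (hxhat t j)]
      exact boosting (hgrad t j) (hcont t j) hβ (hlip t j) (hsub t j)
        (hmono t j) (hzero t j) hxC hyC
    have hdd := abs_le.1 (descent (hgrad t j) (hcont t j) hβ (hlip t j) hyC hiC)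
    have e1 : (inner ℝ (g t j (xhat t j)) (x - xhat t i) : ℝ)
        = (inner ℝ (g t j (xhat t j)) (x - xhat t j) : ℝ)
          + (inner ℝ (g t j (xhat t j)) (xhat t j - xhat t i) : ℝ) := by
      rw [← inner_add_right]
      congr 1
      abel
    have e2 : (inner ℝ (f' t j (xhat t j) - g t j (xhat t j)) (xhat t j - xhat t i) : ℝ)
        = (inner ℝ (f' t j (xhat t j)) (xhat t j - xhat t i) : ℝ)
          - (inner ℝ (g t j (xhat t j)) (xhat t j - xhat t i) : ℝ) := by
      rw [inner_sub_left]
    have e3 : (inner ℝ (f' t j (xhat t j)) (xhat t j - xhat t i) : ℝ)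
        = - (inner ℝ (f' t j (xhat t j)) (xhat t i - xhat t j) : ℝ) := by
      rw [← inner_neg_right]
      congr 1
      abel
    rw [e1, e2, e3]
    linarith [hdd.1, hdd.2]
  calc (1 - 1 / Real.exp 1) * (∑ t, ∑ j, f t j x) - ∑ t, ∑ j, f t j (xhat t i)
      = ∑ t, ∑ j, ((1 - 1 / Real.exp 1) * f t j x - f t j (xhat t i)) := by
        rw [Finset.mul_sum, ← Finset.sum_sub_distrib]
        exact Finset.sum_congr rfl (fun t _ => by rw [Finset.mul_sum, ← Finset.sum_sub_distrib])
    _ ≤ ∑ t, ∑ j, ((inner ℝ (g t j (xhat t j)) (x - xhat t i) : ℝ) +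
          (inner ℝ (f' t j (xhat t j) - g t j (xhat t j)) (xhat t j - xhat t i) : ℝ) +
          β / 2 * ‖xhat t i - xhat t j‖ ^ 2) :=
        Finset.sum_le_sum (fun t _ => Finset.sum_le_sum (fun j _ => key t j))
    _ = _ := by
        rw [Finset.mul_sum, ← Finset.sum_add_distrib, ← Finset.sum_add_distrib]
        exact Finset.sum_congr rfl
          (fun t _ => by rw [Finset.mul_sum, ← Finset.sum_add_distrib, ← Finset.sum_add_distrib])
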